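/- In ℂ[α,β,γ], let J_2 be the ideal (α² + β − 8, α(β + 8) + γ, αγ). Then J_2 equals the intersection (α − 4, β + 8, γ) ∩ (α², β − 8, γ + 16α) ∩ (α + 4, β + 8, γ), and consequently there is a ring isomorphism ℂ[α,β,γ]/J_2 ≅ ℂ[α,β,γ]/(α−4, β+8, γ) × ℂ[α,β,γ]/(α², β−8, γ+16α) × ℂ[α,β,γ]/(α+4, β+8, γ). -/

import Mathlib

open MvPolynomial

noncomputable section

abbrev R3 : Type := MvPolynomial (Fin 3) ℂ

def al : R3 := X 0
def be : R3 := X 1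
def ga : R3 := X 2

def J2 : Ideal R3 := Ideal.span {al ^ 2 + be - 8, al * (be + 8) + ga, al * ga}

def I1 : Ideal R3 := Ideal.span {al - 4, be + 8, ga}
def I2 : Ideal R3 := Ideal.span {al ^ 2, be - 8, ga + 16 * al}
def I3 : Ideal R3 := Ideal.span {al + 4, be + 8, ga}

lemma mem3 {p q r x : R3} (u v w : R3) (h : x = u * p + v * q + w * r) :
    x ∈ Ideal.span {p, q, r} := by
  subst h
  refine add_mem (add_mem ?_ ?_) ?_ <;>
    exact Ideal.mul_mem_left _ _ (Ideal.subset_span (by simp))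

lemma prod3_le {S1 S2 S3 : Set R3} {K : Ideal R3}
    (h : ∀ x ∈ S1, ∀ y ∈ S2, ∀ z ∈ S3, x * y * z ∈ K) :
    Ideal.span S1 * Ideal.span S2 * Ideal.span S3 ≤ K := by
  rw [Ideal.span_mul_span, Ideal.span_mul_span, Ideal.span_le]
  rintro x hx
  simp only [Set.mem_mul] at hx
  obtain ⟨s, ⟨a, ha, b, hb, rfl⟩, t, ht, rfl⟩ := hx
  exact h a ha b hb t ht

lemma products_mem :
    ∀ x ∈ ({al - 4, be + 8, ga} : Set R3),
    ∀ y ∈ ({al ^ 2, be - 8, ga + 16 * al} : Set R3),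
    ∀ z ∈ ({al + 4, be + 8, ga} : Set R3),
      x * y * z ∈ Ideal.span {al ^ 2 + be - 8, al * (be + 8) + ga, al * ga} := by
  intro x hx y hy z hz
  simp only [Set.mem_insert_iff, Set.mem_singleton_iff] at hx hy hz
  rcases hx with rfl | rfl | rfl <;> rcases hy with rfl | rfl | rfl <;>
    rcases hz with rfl | rfl | rfl
  · exact mem3 (al ^ 2) ((-1) * al) (1) (by ring)
  · exact mem3 (0) (al ^ 2 + (-4) * al) ((-1) * al + 4) (by ring)
  · exact mem3 (0) (0) (al ^ 2 + (-4) * al) (by ring)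
  · exact mem3 ((-16)) (al) ((-1)) (by ring)
  · exact mem3 (al * be + 8 * al + (-4) * be + (-32)) ((-1) * al ^ 2 + 4 * al) (al + (-4)) (by ring)
  · exact mem3 (al * ga + (-4) * ga) (0) ((-1) * al ^ 2 + 4 * al) (by ring)
  · exact mem3 (16 * al) ((-16)) (al) (by ring)
  · exact mem3 (al * ga + (-4) * ga) (16 * al + (-64)) ((-1) * al ^ 2 + 4 * al) (by ring)
  · exact mem3 ((-1) * al ^ 2 * ga + 4 * al * ga) (al * ga + (-4) * ga) (al ^ 3 + (-4) * al ^ 2) (by ring)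
  · exact mem3 (0) (al ^ 2 + 4 * al) ((-1) * al + (-4)) (by ring)
  · exact mem3 (al ^ 2 * be + 8 * al ^ 2) ((-1) * al ^ 3 + 16 * al) (al ^ 2 + (-16)) (by ring)
  · exact mem3 (al ^ 2 * ga) (0) ((-1) * al ^ 3 + 16 * al) (by ring)
  · exact mem3 (al * be + 8 * al + 4 * be + 32) ((-1) * al ^ 2 + (-4) * al) (al + 4) (by ring)
  · exact mem3 ((-1) * al ^ 2 * be + (-8) * al ^ 2 + be ^ 2 + 16 * be + 64) (al ^ 3 + (-16) * al) ((-1) * al ^ 2 + 16) (by ring)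
  · exact mem3 ((-1) * al ^ 2 * ga + be * ga + 8 * ga) (0) (al ^ 3 + (-16) * al) (by ring)
  · exact mem3 (al * ga + 4 * ga) (16 * al + 64) ((-1) * al ^ 2 + (-4) * al) (by ring)
  · exact mem3 ((-1) * al ^ 2 * ga + 16 * al * be + 128 * al + be * ga + 24 * ga) ((-16) * al ^ 2 + 256) (al ^ 3 + (-16) * al) (by ring)
  · exact mem3 (al ^ 3 * ga + ga ^ 2) ((-1) * al ^ 2 * ga + 16 * ga) ((-1) * al ^ 4 + 16 * al ^ 2) (by ring)
  · exact mem3 (0) (0) (al ^ 2 + 4 * al) (by ring)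
  · exact mem3 (al ^ 2 * ga) (0) ((-1) * al ^ 3 + 16 * al) (by ring)
  · exact mem3 ((-1) * al ^ 3 * ga) (al ^ 2 * ga) (al ^ 4 + (-16) * al ^ 2) (by ring)
  · exact mem3 (al * ga + 4 * ga) (0) ((-1) * al ^ 2 + (-4) * al) (by ring)
  · exact mem3 ((-1) * al ^ 2 * ga + be * ga + 8 * ga) (0) (al ^ 3 + (-16) * al) (by ring)
  · exact mem3 (al ^ 3 * ga + ga ^ 2) ((-1) * al ^ 2 * ga) ((-1) * al ^ 4 + 16 * al ^ 2) (by ring)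
  · exact mem3 ((-1) * al ^ 2 * ga + (-4) * al * ga) (al * ga + 4 * ga) (al ^ 3 + 4 * al ^ 2) (by ring)
  · exact mem3 (al ^ 3 * ga + ga ^ 2) ((-1) * al ^ 2 * ga + 16 * ga) ((-1) * al ^ 4 + 16 * al ^ 2) (by ring)
  · exact mem3 ((-1) * al ^ 4 * ga + (-1) * al * ga ^ 2) (al ^ 3 * ga + ga ^ 2) (al ^ 5 + (-16) * al ^ 3) (by ring)

lemma eight_ne : (8 : ℂ) ≠ 0 := by norm_num
lemma sixteen_ne : (16 : ℂ) ≠ 0 := by norm_num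

lemma cp13 : I1 ⊔ I3 = ⊤ := by
  rw [Ideal.eq_top_iff_one]
  refine Submodule.mem_sup.2 ⟨C (8⁻¹ : ℂ) * -(al - 4), ?_, C (8⁻¹ : ℂ) * (al + 4), ?_, ?_⟩
  · exact Ideal.mul_mem_left _ _ (mem3 (-1) 0 0 (by ring))
  · exact Ideal.mul_mem_left _ _ (mem3 1 0 0 (by ring))
  · rw [← mul_add]
    have : -(al - 4) + (al + 4) = (C (8 : ℂ) : R3) := by
      rw [map_ofNat]; ring
    rw [this, ← C_mul, inv_mul_cancel₀ eight_ne, C_1]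

lemma cp12 : I1 ⊔ I2 = ⊤ := by
  rw [Ideal.eq_top_iff_one]
  refine Submodule.mem_sup.2 ⟨C (16⁻¹ : ℂ) * (be + 8), ?_, C (16⁻¹ : ℂ) * -(be - 8), ?_, ?_⟩
  · exact Ideal.mul_mem_left _ _ (mem3 0 1 0 (by ring))
  · exact Ideal.mul_mem_left _ _ (mem3 0 (-1) 0 (by ring))
  · rw [← mul_add]
    have : (be + 8) + -(be - 8) = (C (16 : ℂ) : R3) := by
      rw [map_ofNat]; ring
    rw [this, ← C_mul, inv_mul_cancel₀ sixteen_ne, C_1]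

lemma cp23 : I2 ⊔ I3 = ⊤ := by
  rw [Ideal.eq_top_iff_one]
  refine Submodule.mem_sup.2 ⟨C (16⁻¹ : ℂ) * -(be - 8), ?_, C (16⁻¹ : ℂ) * (be + 8), ?_, ?_⟩
  · exact Ideal.mul_mem_left _ _ (mem3 0 (-1) 0 (by ring))
  · exact Ideal.mul_mem_left _ _ (mem3 0 1 0 (by ring))
  · rw [← mul_add]
    have : -(be - 8) + (be + 8) = (C (16 : ℂ) : R3) := by
      rw [map_ofNat]; ring
    rw [this, ← C_mul, inv_mul_cancel₀ sixteen_ne, C_1]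

lemma J2_le : J2 ≤ I1 ⊓ I2 ⊓ I3 := by
  rw [J2, Ideal.span_le]
  rintro x hx
  simp only [Set.mem_insert_iff, Set.mem_singleton_iff] at hx
  rcases hx with rfl | rfl | rfl <;>
    refine ⟨⟨?_, ?_⟩, ?_⟩
  · exact mem3 (al + 4) 1 0 (by ring)
  · exact mem3 1 1 0 (by ring)
  · exact mem3 (al - 4) 1 0 (by ring)
  · exact mem3 (be + 8) 4 1 (by ring)
  · exact mem3 0 al 1 (by ring)
  · exact mem3 0 al 1 (by ring)
  · exact mem3 0 0 al (by ring)
  · exact mem3 (-16) 0 al (by ring)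
  · exact mem3 0 0 al (by ring)

lemma le_J2 : I1 ⊓ I2 ⊓ I3 ≤ J2 := by
  have h12 : I1 * I2 = I1 ⊓ I2 := Ideal.mul_eq_inf_of_coprime cp12
  have hsup : (I1 ⊓ I2) ⊔ I3 = ⊤ := by
    rw [← h12]
    rw [sup_comm, Ideal.sup_mul_eq_of_coprime_left (by rw [sup_comm]; exact cp13),
      sup_comm]
    exact cp23
  have h123 : (I1 ⊓ I2) * I3 = (I1 ⊓ I2) ⊓ I3 := Ideal.mul_eq_inf_of_coprime hsup
  rw [← h123, ← h12, J2]
  exact prod3_le products_mem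

lemma J2_eq : J2 = I1 ⊓ I2 ⊓ I3 := le_antisymm J2_le le_J2

theorem stmt8 :
    J2 = I1 ⊓ I2 ⊓ I3 ∧
    Nonempty ((R3 ⧸ J2) ≃+* (R3 ⧸ I1) × (R3 ⧸ I2) × (R3 ⧸ I3)) := by
  refine ⟨J2_eq, ⟨?_⟩⟩
  have c23 : IsCoprime I2 I3 := (Ideal.isCoprime_iff_sup_eq).2 cp23
  have c1_23 : IsCoprime I1 (I2 ⊓ I3) := by
    rw [Ideal.isCoprime_iff_sup_eq, ← Ideal.mul_eq_inf_of_coprime cp23,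
      Ideal.sup_mul_eq_of_coprime_left cp12]
    exact cp13
  have e1 : (R3 ⧸ J2) ≃+* (R3 ⧸ (I1 ⊓ (I2 ⊓ I3))) := by
    rw [J2_eq, inf_assoc]
  have e2 := Ideal.quotientInfEquivQuotientProd I1 (I2 ⊓ I3) c1_23
  have e3 := Ideal.quotientInfEquivQuotientProd I2 I3 c23
  exact e1.trans (e2.trans (RingEquiv.prodCongr (RingEquiv.refl _) e3))
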